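/- The function u(r,θ) = (r³/9)(1 - cos(3(θ-θ₁))), defined in polar coordinates on the open cone {θ₁ < θ < θ₁ + 2π/3} and extended by zero elsewhere, is nonnegative on ℝ², vanishes together with its gradient on the boundary rays θ = θ₁ and θ = θ₁ + 2π/3, and satisfies Δu = |x| on the open cone. -/

import Mathlib

open Real Set

noncomputable def lap (f : ℝ × ℝ → ℝ) (p : ℝ × ℝ) : ℝ :=
  deriv (fun t => deriv (fun s => f (s, p.2)) t) p.1 +
  deriv (fun t => deriv (fun s => f (p.1, s)) t) p.2

noncomputable def nrm (p : ℝ × ℝ) : ℝ := Real.sqrt (p.1 ^ 2 + p.2 ^ 2)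

noncomputable def Fc (θ₁ : ℝ) (p : ℝ × ℝ) : ℝ :=
  (Real.sqrt (p.1^2 + p.2^2) * (p.1^2 + p.2^2)
    - (p.1^3 - 3*p.1*p.2^2) * Real.cos (3*θ₁)
    - (3*p.1^2*p.2 - p.2^3) * Real.sin (3*θ₁)) / 9

lemma F_polar (θ₁ r θ : ℝ) (hr : 0 ≤ r) :
    Fc θ₁ (r * cos θ, r * sin θ) = r^3/9 * (1 - Real.cos (3*(θ - θ₁))) := by
  have hpy := Real.sin_sq_add_cos_sq θ
  have h1 : (r * cos θ)^2 + (r * sin θ)^2 = r^2 := by linear_combination r^2 * hpy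
  have h2 : Real.sqrt ((r * cos θ)^2 + (r * sin θ)^2) = r := by
    rw [h1, Real.sqrt_sq hr]
  have h3 : Real.cos (3*(θ - θ₁)) = Real.cos (3*θ) * Real.cos (3*θ₁) + Real.sin (3*θ) * Real.sin (3*θ₁) := by
    rw [show 3*(θ - θ₁) = 3*θ - 3*θ₁ by ring, Real.cos_sub]
  have e4 := Real.cos_three_mul θ
  have e5 := Real.sin_three_mul θ
  simp only [Fc, h2, h3]
  linear_combination (r^3/9)*Real.cos (3*θ₁)*e4 + (r^3/9)*Real.sin (3*θ₁)*e5
    + (r^3/9)*(3*Real.cos θ*Real.cos (3*θ₁) - 3*Real.sin θ*Real.sin (3*θ₁) + 1)*hpy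

lemma sin_pos_window {x : ℝ} (h1 : 0 ≤ x) (h2 : x < 2*π) (hs : 0 < Real.sin x) : 0 < x ∧ x < π := by
  have hπ := Real.pi_pos
  constructor
  · rcases eq_or_lt_of_le h1 with h | h
    · exfalso; rw [← h] at hs; simp at hs
    · exact h
  · by_contra hle
    push_neg at hle
    have : Real.sin x ≤ 0 := by
      have h3 : Real.sin (x - π) ≥ 0 := Real.sin_nonneg_of_nonneg_of_le_pi (by linarith) (by linarith)
      have h4 : Real.sin (x - π) = -Real.sin x := by
        rw [Real.sin_sub, Real.sin_pi, Real.cos_pi]; ring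
      linarith [h4 ▸ h3]
    linarith

lemma cone_iff (θ₁ : ℝ) (p : ℝ × ℝ) :
    (∃ r θ : ℝ, 0 < r ∧ θ₁ < θ ∧ θ < θ₁ + 2 * π / 3 ∧ p = (r * cos θ, r * sin θ)) ↔
    (0 < Real.cos θ₁ * p.2 - Real.sin θ₁ * p.1 ∧
     0 < Real.sin (θ₁ + 2 * π / 3) * p.1 - Real.cos (θ₁ + 2 * π / 3) * p.2) := by
  have hπ := Real.pi_pos
  constructor
  · rintro ⟨r, θ, hr, h1, h2, rfl⟩
    constructor
    · have : Real.cos θ₁ * (r * sin θ) - Real.sin θ₁ * (r * cos θ) = r * Real.sin (θ - θ₁) := by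
        rw [Real.sin_sub]; ring
      rw [this]
      exact mul_pos hr (Real.sin_pos_of_pos_of_lt_pi (by linarith) (by linarith))
    · have : Real.sin (θ₁ + 2*π/3) * (r * cos θ) - Real.cos (θ₁ + 2*π/3) * (r * sin θ)
          = r * Real.sin ((θ₁ + 2*π/3) - θ) := by
        rw [Real.sin_sub]; ring
      rw [this]
      exact mul_pos hr (Real.sin_pos_of_pos_of_lt_pi (by linarith) (by linarith))
  · rintro ⟨hA, hB⟩
    have hp0 : p ≠ 0 := by
      rintro rfl
      simp at hA
    set z : ℂ := ⟨p.1, p.2⟩ with hz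
    have hz0 : z ≠ 0 := by
      simp only [hz, Ne, Complex.ext_iff, Complex.zero_re, Complex.zero_im]
      intro h
      exact hp0 (Prod.ext h.1 h.2)
    set R := ‖z‖ with hR
    set ψ := Complex.arg z with hψ
    have hR0 : 0 < R := norm_pos_iff.mpr hz0
    have hx : R * Real.cos ψ = p.1 := Complex.norm_mul_cos_arg z
    have hy : R * Real.sin ψ = p.2 := Complex.norm_mul_sin_arg z
    obtain ⟨k, hk1, hk2⟩ : ∃ k : ℤ, 0 ≤ ψ + k * (2*π) - θ₁ ∧ ψ + k * (2*π) - θ₁ < 2*π := by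
      refine ⟨⌈(θ₁ - ψ) / (2*π)⌉, ?_, ?_⟩
      · have h1 := Int.le_ceil ((θ₁ - ψ) / (2*π))
        have h2π : (0:ℝ) < 2*π := by linarith
        rw [div_le_iff₀ h2π] at h1
        linarith
      · have h1 := Int.ceil_lt_add_one ((θ₁ - ψ) / (2*π))
        have h2π : (0:ℝ) < 2*π := by linarith
        have hq : (θ₁ - ψ) / (2*π) * (2*π) = θ₁ - ψ := div_mul_cancel₀ _ (by linarith)
        nlinarith [h1, hq]
    set θ := ψ + k * (2*π) with hθ
    have hcos : Real.cos θ = Real.cos ψ := Real.cos_add_int_mul_two_pi ψ k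
    have hsin : Real.sin θ = Real.sin ψ := Real.sin_add_int_mul_two_pi ψ k
    have hA' : 0 < Real.sin (θ - θ₁) := by
      have h : R * Real.sin (θ - θ₁) = Real.cos θ₁ * p.2 - Real.sin θ₁ * p.1 := by
        rw [Real.sin_sub, hcos, hsin, ← hx, ← hy]; ring
      nlinarith [h ▸ hA]
    have hB' : 0 < Real.sin ((θ₁ + 2*π/3) - θ) := by
      have h : R * Real.sin ((θ₁ + 2*π/3) - θ) = Real.sin (θ₁ + 2*π/3) * p.1 - Real.cos (θ₁ + 2*π/3) * p.2 := by
        rw [Real.sin_sub, hcos, hsin, ← hx, ← hy]; ring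
      nlinarith [h ▸ hB]
    obtain ⟨hw1, hw2⟩ := sin_pos_window hk1 hk2 hA'
    have hlt : θ < θ₁ + 2*π/3 := by
      by_contra hle
      push_neg at hle
      have : Real.sin ((θ₁ + 2*π/3) - θ) ≤ 0 :=
        Real.sin_nonpos_of_nonpos_of_neg_pi_le (by linarith) (by linarith)
      linarith
    exact ⟨R, θ, hR0, by linarith, hlt, by simp [Prod.ext_iff, hcos, hsin, hx, hy]⟩

noncomputable def G1 (θ₁ y t : ℝ) : ℝ :=
  (3*t*Real.sqrt (t^2 + y^2) - (3*t^2 - 3*y^2)*Real.cos (3*θ₁) - 6*t*y*Real.sin (3*θ₁))/9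

noncomputable def G2 (θ₁ x t : ℝ) : ℝ :=
  (3*t*Real.sqrt (x^2 + t^2) + 6*x*t*Real.cos (3*θ₁) - (3*x^2 - 3*t^2)*Real.sin (3*θ₁))/9

lemma sq_sum_ne_symm {x t : ℝ} (h : x^2 + t^2 ≠ 0) : t^2 + x^2 ≠ 0 := by
  rwa [add_comm] at h

lemma slice1 (θ₁ y t : ℝ) (hN : t^2 + y^2 ≠ 0) :
    HasDerivAt (fun s => Fc θ₁ (s, y)) (G1 θ₁ y t) t := by
  have hNpos : 0 < t^2 + y^2 := lt_of_le_of_ne (by positivity) (Ne.symm hN)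
  have hsq : Real.sqrt (t^2+y^2) * Real.sqrt (t^2+y^2) = t^2+y^2 := Real.mul_self_sqrt (by positivity)
  have hsqpos : 0 < Real.sqrt (t^2+y^2) := Real.sqrt_pos.mpr hNpos
  have hq : HasDerivAt (fun s : ℝ => s^2 + y^2) (2*t) t := by
    simpa using (hasDerivAt_pow 2 t).add_const (y^2)
  have hs : HasDerivAt (fun s => Real.sqrt (s^2+y^2)) (1/(2*Real.sqrt (t^2+y^2)) * (2*t)) t :=
    (Real.hasDerivAt_sqrt hN).comp t hq
  have hp1 : HasDerivAt (fun s : ℝ => s^3 - 3*s*y^2) (3*t^2 - 3*y^2) t := by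
    have h1 : HasDerivAt (fun s : ℝ => s^3) (3*t^2) t := by simpa using hasDerivAt_pow 3 t
    have h2 : HasDerivAt (fun s : ℝ => 3*s*y^2) (3*y^2) t := by
      simpa using (((hasDerivAt_id t).const_mul 3).mul_const (y^2))
    exact h1.sub h2
  have hp2 : HasDerivAt (fun s : ℝ => 3*s^2*y - y^3) (6*t*y) t := by
    have h1 : HasDerivAt (fun s : ℝ => 3*s^2*y) (6*t*y) t := by
      have := ((hasDerivAt_pow 2 t).const_mul 3).mul_const y
      exact this.congr_deriv (by ring)
    simpa using h1.sub_const (y^3)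
  have h := (((hs.mul hq).sub (hp1.mul_const (Real.cos (3*θ₁)))).sub
      (hp2.mul_const (Real.sin (3*θ₁)))).div_const 9
  refine h.congr_deriv ?_
  have key : 1/(2*Real.sqrt (t^2+y^2))*(2*t)*(t^2+y^2) + Real.sqrt (t^2+y^2)*(2*t)
      = 3*t*Real.sqrt (t^2+y^2) := by
    field_simp
    linear_combination (-t)*hsq
  unfold G1
  rw [key]

lemma slice2 (θ₁ x t : ℝ) (hN : x^2 + t^2 ≠ 0) :
    HasDerivAt (fun s => Fc θ₁ (x, s)) (G2 θ₁ x t) t := by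
  have hNpos : 0 < x^2 + t^2 := lt_of_le_of_ne (by positivity) (Ne.symm hN)
  have hsq : Real.sqrt (x^2+t^2) * Real.sqrt (x^2+t^2) = x^2+t^2 := Real.mul_self_sqrt (by positivity)
  have hq : HasDerivAt (fun s : ℝ => x^2 + s^2) (2*t) t := by
    simpa using ((hasDerivAt_pow 2 t).const_add (x^2))
  have hs : HasDerivAt (fun s => Real.sqrt (x^2+s^2)) (1/(2*Real.sqrt (x^2+t^2)) * (2*t)) t :=
    (Real.hasDerivAt_sqrt hN).comp t hq
  have hp1 : HasDerivAt (fun s : ℝ => x^3 - 3*x*s^2) (-(6*x*t)) t := by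
    have h2 : HasDerivAt (fun s : ℝ => 3*x*s^2) (6*x*t) t := by
      have := (hasDerivAt_pow 2 t).const_mul (3*x)
      exact this.congr_deriv (by ring)
    exact ((hasDerivAt_const t (x^3)).sub h2).congr_deriv (by ring)
  have hp2 : HasDerivAt (fun s : ℝ => 3*x^2*s - s^3) (3*x^2 - 3*t^2) t := by
    have h1 : HasDerivAt (fun s : ℝ => 3*x^2*s) (3*x^2) t := by
      simpa using (hasDerivAt_id t).const_mul (3*x^2)
    have h2 : HasDerivAt (fun s : ℝ => s^3) (3*t^2) t := by simpa using hasDerivAt_pow 3 t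
    exact h1.sub h2
  have h := (((hs.mul hq).sub (hp1.mul_const (Real.cos (3*θ₁)))).sub
      (hp2.mul_const (Real.sin (3*θ₁)))).div_const 9
  refine h.congr_deriv ?_
  have key : 1/(2*Real.sqrt (x^2+t^2))*(2*t)*(x^2+t^2) + Real.sqrt (x^2+t^2)*(2*t)
      = 3*t*Real.sqrt (x^2+t^2) := by
    field_simp
    linear_combination (-t)*hsq
  unfold G2
  rw [key]
  ring

lemma slice1' (θ₁ y t : ℝ) (hN : t^2 + y^2 ≠ 0) :
    HasDerivAt (G1 θ₁ y)
      ((3*Real.sqrt (t^2+y^2) + 3*t^2/Real.sqrt (t^2+y^2)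
        - 6*t*Real.cos (3*θ₁) - 6*y*Real.sin (3*θ₁))/9) t := by
  have hNpos : 0 < t^2 + y^2 := lt_of_le_of_ne (by positivity) (Ne.symm hN)
  have hsq : Real.sqrt (t^2+y^2) * Real.sqrt (t^2+y^2) = t^2+y^2 := Real.mul_self_sqrt (by positivity)
  have hsqpos : 0 < Real.sqrt (t^2+y^2) := Real.sqrt_pos.mpr hNpos
  have hq : HasDerivAt (fun s : ℝ => s^2 + y^2) (2*t) t := by
    simpa using (hasDerivAt_pow 2 t).add_const (y^2)
  have hs : HasDerivAt (fun s => Real.sqrt (s^2+y^2)) (1/(2*Real.sqrt (t^2+y^2)) * (2*t)) t :=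
    (Real.hasDerivAt_sqrt hN).comp t hq
  have h1 : HasDerivAt (fun s : ℝ => 3*s*Real.sqrt (s^2+y^2))
      (3*Real.sqrt (t^2+y^2) + (3*t)*(1/(2*Real.sqrt (t^2+y^2)) * (2*t))) t := by
    have := ((hasDerivAt_id t).const_mul 3).mul hs
    exact this.congr_deriv (by simp)
  have h2 : HasDerivAt (fun s : ℝ => (3*s^2-3*y^2)*Real.cos (3*θ₁)) (6*t*Real.cos (3*θ₁)) t := by
    have := (((hasDerivAt_pow 2 t).const_mul 3).sub_const (3*y^2)).mul_const (Real.cos (3*θ₁))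
    exact this.congr_deriv (by ring)
  have h3 : HasDerivAt (fun s : ℝ => 6*s*y*Real.sin (3*θ₁)) (6*y*Real.sin (3*θ₁)) t := by
    have := (((hasDerivAt_id t).const_mul 6).mul_const y).mul_const (Real.sin (3*θ₁))
    exact this.congr_deriv (by simp)
  have h := ((h1.sub h2).sub h3).div_const 9
  refine h.congr_deriv ?_
  have key : (3*t)*(1/(2*Real.sqrt (t^2+y^2)) * (2*t)) = 3*t^2/Real.sqrt (t^2+y^2) := by
    field_simp
  rw [← key]

lemma slice2' (θ₁ x t : ℝ) (hN : x^2 + t^2 ≠ 0) :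
    HasDerivAt (G2 θ₁ x)
      ((3*Real.sqrt (x^2+t^2) + 3*t^2/Real.sqrt (x^2+t^2)
        + 6*x*Real.cos (3*θ₁) + 6*t*Real.sin (3*θ₁))/9) t := by
  have hNpos : 0 < x^2 + t^2 := lt_of_le_of_ne (by positivity) (Ne.symm hN)
  have hsqpos : 0 < Real.sqrt (x^2+t^2) := Real.sqrt_pos.mpr hNpos
  have hq : HasDerivAt (fun s : ℝ => x^2 + s^2) (2*t) t := by
    simpa using ((hasDerivAt_pow 2 t).const_add (x^2))
  have hs : HasDerivAt (fun s => Real.sqrt (x^2+s^2)) (1/(2*Real.sqrt (x^2+t^2)) * (2*t)) t :=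
    (Real.hasDerivAt_sqrt hN).comp t hq
  have h1 : HasDerivAt (fun s : ℝ => 3*s*Real.sqrt (x^2+s^2))
      (3*Real.sqrt (x^2+t^2) + (3*t)*(1/(2*Real.sqrt (x^2+t^2)) * (2*t))) t := by
    have := ((hasDerivAt_id t).const_mul 3).mul hs
    exact this.congr_deriv (by simp)
  have h2 : HasDerivAt (fun s : ℝ => 6*x*s*Real.cos (3*θ₁)) (6*x*Real.cos (3*θ₁)) t := by
    simpa using (((hasDerivAt_id t).const_mul (6*x))).mul_const (Real.cos (3*θ₁))
  have h3 : HasDerivAt (fun s : ℝ => (3*x^2-3*s^2)*Real.sin (3*θ₁)) (-(6*t)*Real.sin (3*θ₁)) t := by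
    have h4 : HasDerivAt (fun s : ℝ => 3*x^2-3*s^2) (-(6*t)) t := by
      have := (hasDerivAt_const t (3*x^2)).sub ((hasDerivAt_pow 2 t).const_mul 3)
      exact this.congr_deriv (by ring)
    simpa using h4.mul_const (Real.sin (3*θ₁))
  have h := ((h1.add h2).sub h3).div_const 9
  refine h.congr_deriv ?_
  have key : (3*t)*(1/(2*Real.sqrt (x^2+t^2)) * (2*t)) = 3*t^2/Real.sqrt (x^2+t^2) := by
    field_simp
  rw [← key]
  unfold G2 at *
  ring

lemma lap_Fc (θ₁ : ℝ) (p : ℝ × ℝ) (hN : p.1^2 + p.2^2 ≠ 0) :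
    lap (Fc θ₁) p = Real.sqrt (p.1^2 + p.2^2) := by
  have hNpos : 0 < p.1^2 + p.2^2 := lt_of_le_of_ne (by positivity) (Ne.symm hN)
  have hsq : Real.sqrt (p.1^2+p.2^2) * Real.sqrt (p.1^2+p.2^2) = p.1^2+p.2^2 :=
    Real.mul_self_sqrt (by positivity)
  have hsqpos : 0 < Real.sqrt (p.1^2+p.2^2) := Real.sqrt_pos.mpr hNpos
  have hV1 : IsOpen {t : ℝ | t^2 + p.2^2 ≠ 0} := by
    have hc : Continuous fun t : ℝ => t^2 + p.2^2 := by continuity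
    exact isOpen_ne.preimage hc
  have hV2 : IsOpen {s : ℝ | p.1^2 + s^2 ≠ 0} := by
    have hc : Continuous fun s : ℝ => p.1^2 + s^2 := by continuity
    exact isOpen_ne.preimage hc
  have e1 : deriv (fun t => deriv (fun s => Fc θ₁ (s, p.2)) t) p.1 = deriv (G1 θ₁ p.2) p.1 := by
    apply Filter.EventuallyEq.deriv_eq
    filter_upwards [hV1.mem_nhds hN] with t ht
    exact (slice1 θ₁ p.2 t ht).deriv
  have e2 : deriv (fun t => deriv (fun s => Fc θ₁ (p.1, s)) t) p.2 = deriv (G2 θ₁ p.1) p.2 := by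
    apply Filter.EventuallyEq.deriv_eq
    filter_upwards [hV2.mem_nhds hN] with t ht
    exact (slice2 θ₁ p.1 t ht).deriv
  rw [lap, e1, e2, (slice1' θ₁ p.2 p.1 hN).deriv, (slice2' θ₁ p.1 p.2 hN).deriv]
  field_simp
  linear_combination (-3)*hsq

lemma clm_zero (D : ℝ × ℝ →L[ℝ] ℝ) (h1 : D (1,0) = 0) (h2 : D (0,1) = 0) : D = 0 := by
  apply ContinuousLinearMap.ext
  rintro ⟨x, y⟩
  have : ((x, y) : ℝ × ℝ) = x • ((1:ℝ),(0:ℝ)) + y • ((0:ℝ),(1:ℝ)) := by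
    simp [Prod.ext_iff]
  rw [this, map_add, map_smul, map_smul, h1, h2]
  simp

lemma Fc_diff (θ₁ : ℝ) (p : ℝ × ℝ) (hN : p.1^2 + p.2^2 ≠ 0) :
    DifferentiableAt ℝ (Fc θ₁) p := by
  have hQ : DifferentiableAt ℝ (fun q : ℝ × ℝ => q.1^2 + q.2^2) p := by fun_prop
  have hs : DifferentiableAt ℝ (fun q : ℝ × ℝ => Real.sqrt (q.1^2 + q.2^2)) p :=
    hQ.sqrt hN
  have hP1 : DifferentiableAt ℝ (fun q : ℝ × ℝ => (q.1^3 - 3*q.1*q.2^2) * Real.cos (3*θ₁)) p := by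
    fun_prop
  have hP2 : DifferentiableAt ℝ (fun q : ℝ × ℝ => (3*q.1^2*q.2 - q.2^3) * Real.sin (3*θ₁)) p := by
    fun_prop
  unfold Fc
  exact (((hs.mul hQ).sub hP1).sub hP2).mul_const (9:ℝ)⁻¹

lemma lap_congr {f g : ℝ × ℝ → ℝ} {p : ℝ × ℝ} (h : f =ᶠ[nhds p] g) : lap f p = lap g p := by
  obtain ⟨U, hU1, hU2, hU3⟩ := mem_nhds_iff.mp h
  have c1 : Continuous fun t : ℝ => ((t, p.2) : ℝ × ℝ) := by continuity
  have c2 : Continuous fun t : ℝ => ((p.1, t) : ℝ × ℝ) := by continuity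
  have hV1 : IsOpen {t : ℝ | (t, p.2) ∈ U} := hU2.preimage c1
  have hV2 : IsOpen {t : ℝ | (p.1, t) ∈ U} := hU2.preimage c2
  have hp1 : p.1 ∈ {t : ℝ | (t, p.2) ∈ U} := by simpa using hU3
  have hp2 : p.2 ∈ {t : ℝ | (p.1, t) ∈ U} := by simpa using hU3
  unfold lap
  congr 1
  · apply Filter.EventuallyEq.deriv_eq
    filter_upwards [hV1.mem_nhds hp1] with t ht
    apply Filter.EventuallyEq.deriv_eq
    filter_upwards [hV1.mem_nhds ht] with s hs2
    exact hU1 hs2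
  · apply Filter.EventuallyEq.deriv_eq
    filter_upwards [hV2.mem_nhds hp2] with t ht
    apply Filter.EventuallyEq.deriv_eq
    filter_upwards [hV2.mem_nhds ht] with s hs2
    exact hU1 hs2

lemma boundary_fderiv (θ₁ r θ : ℝ) (hr : 0 < r)
    (hc : Real.cos (3*θ) = Real.cos (3*θ₁)) (hs3 : Real.sin (3*θ) = Real.sin (3*θ₁)) :
    HasFDerivAt (Fc θ₁) (0 : ℝ × ℝ →L[ℝ] ℝ) (r * Real.cos θ, r * Real.sin θ) := by
  have hpy := Real.sin_sq_add_cos_sq θ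
  have hN : (r * Real.cos θ)^2 + (r * Real.sin θ)^2 ≠ 0 := by
    rw [show (r*Real.cos θ)^2 + (r*Real.sin θ)^2 = r^2 by linear_combination r^2*hpy]
    positivity
  have h2 : Real.sqrt ((r*Real.cos θ)^2 + (r*Real.sin θ)^2) = r := by
    rw [show (r*Real.cos θ)^2 + (r*Real.sin θ)^2 = r^2 by linear_combination r^2*hpy,
      Real.sqrt_sq hr.le]
  have hD : HasFDerivAt (Fc θ₁) (fderiv ℝ (Fc θ₁) (r * Real.cos θ, r * Real.sin θ))
      (r * Real.cos θ, r * Real.sin θ) := (Fc_diff θ₁ _ hN).hasFDerivAt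
  set D := fderiv ℝ (Fc θ₁) (r * Real.cos θ, r * Real.sin θ) with hDdef
  have hl1 : HasDerivAt (fun t : ℝ => ((t, r * Real.sin θ) : ℝ × ℝ)) (1, 0) (r * Real.cos θ) :=
    (hasDerivAt_id _).prodMk (hasDerivAt_const _ _)
  have hx : HasDerivAt (fun t => Fc θ₁ (t, r * Real.sin θ)) (D (1,0)) (r * Real.cos θ) :=
    by exact hD.comp_hasDerivAt (r * Real.cos θ) hl1
  have hl2 : HasDerivAt (fun t : ℝ => ((r * Real.cos θ, t) : ℝ × ℝ)) (0, 1) (r * Real.sin θ) :=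
    (hasDerivAt_const _ _).prodMk (hasDerivAt_id _)
  have hy : HasDerivAt (fun t => Fc θ₁ (r * Real.cos θ, t)) (D (0,1)) (r * Real.sin θ) :=
    by exact hD.comp_hasDerivAt (r * Real.sin θ) hl2
  have e1 : D (1,0) = G1 θ₁ (r * Real.sin θ) (r * Real.cos θ) :=
    hx.unique (slice1 θ₁ (r * Real.sin θ) (r * Real.cos θ) hN)
  have e2 : D (0,1) = G2 θ₁ (r * Real.cos θ) (r * Real.sin θ) :=
    hy.unique (slice2 θ₁ (r * Real.cos θ) (r * Real.sin θ) hN)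
  have z1 : G1 θ₁ (r * Real.sin θ) (r * Real.cos θ) = 0 := by
    unfold G1
    rw [h2, ← hc, ← hs3, Real.cos_three_mul, Real.sin_three_mul]
    linear_combination (r^2/3)*Real.cos θ*(8*Real.sin θ^2 - 4*Real.cos θ^2 - 1) * hpy
  have z2 : G2 θ₁ (r * Real.cos θ) (r * Real.sin θ) = 0 := by
    unfold G2
    rw [h2, ← hc, ← hs3, Real.cos_three_mul, Real.sin_three_mul]
    linear_combination (r^2/3)*Real.sin θ*(8*Real.cos θ^2 - 4*Real.sin θ^2 - 1) * hpy
  have hz : D = 0 := clm_zero D (e1.trans z1) (e2.trans z2)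
  rw [← hz]
  exact hD

theorem stmt0 (θ₁ : ℝ) (hθ₁ : θ₁ ∈ Set.Ico 0 (2 * π)) (u : ℝ × ℝ → ℝ)
    (hcone : ∀ r θ : ℝ, 0 < r → θ₁ < θ → θ < θ₁ + 2 * π / 3 →
      u (r * cos θ, r * sin θ) = r ^ 3 / 9 * (1 - cos (3 * (θ - θ₁))))
    (hzero : ∀ p : ℝ × ℝ,
      (¬ ∃ r θ : ℝ, 0 < r ∧ θ₁ < θ ∧ θ < θ₁ + 2 * π / 3 ∧
        p = (r * cos θ, r * sin θ)) → u p = 0) :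
    (∀ p : ℝ × ℝ, 0 ≤ u p) ∧
    (∀ r : ℝ, 0 < r →
      (u (r * cos θ₁, r * sin θ₁) = 0 ∧ fderiv ℝ u (r * cos θ₁, r * sin θ₁) = 0) ∧
      (u (r * cos (θ₁ + 2 * π / 3), r * sin (θ₁ + 2 * π / 3)) = 0 ∧
        fderiv ℝ u (r * cos (θ₁ + 2 * π / 3), r * sin (θ₁ + 2 * π / 3)) = 0)) ∧
    (∀ r θ : ℝ, 0 < r → θ₁ < θ → θ < θ₁ + 2 * π / 3 →
      lap u (r * cos θ, r * sin θ) = nrm (r * cos θ, r * sin θ)) := by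
  have hπ := Real.pi_pos
  have huF : ∀ q : ℝ × ℝ, (0 < Real.cos θ₁ * q.2 - Real.sin θ₁ * q.1 ∧
      0 < Real.sin (θ₁ + 2 * π / 3) * q.1 - Real.cos (θ₁ + 2 * π / 3) * q.2) →
      u q = Fc θ₁ q := by
    intro q hq
    obtain ⟨r, θ, hr, h1, h2, rfl⟩ := (cone_iff θ₁ q).mpr hq
    rw [hcone r θ hr h1 h2, F_polar θ₁ r θ hr.le]
  have huVal : ∀ q : ℝ × ℝ, u q = 0 ∨ u q = Fc θ₁ q := by
    intro q
    by_cases h : ∃ r θ : ℝ, 0 < r ∧ θ₁ < θ ∧ θ < θ₁ + 2 * π / 3 ∧ q = (r * cos θ, r * sin θ)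
    · exact Or.inr (huF q ((cone_iff θ₁ q).mp h))
    · exact Or.inl (hzero q h)
  -- boundary helper
  have hbd : ∀ r θ : ℝ, 0 < r → Real.cos (3*θ) = Real.cos (3*θ₁) →
      Real.sin (3*θ) = Real.sin (3*θ₁) → u (r * cos θ, r * sin θ) = 0 →
      fderiv ℝ u (r * cos θ, r * sin θ) = 0 := by
    intro r θ hr hc hs3 hu0
    have hF0 : HasFDerivAt (Fc θ₁) (0 : ℝ × ℝ →L[ℝ] ℝ) (r * cos θ, r * sin θ) := boundary_fderiv θ₁ r θ hr hc hs3
    have hFp0 : Fc θ₁ (r * cos θ, r * sin θ) = 0 := by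
      rw [F_polar θ₁ r θ hr.le]
      have : Real.cos (3*(θ - θ₁)) = 1 := by
        rw [show 3*(θ - θ₁) = 3*θ - 3*θ₁ by ring, Real.cos_sub, hc, hs3]
        have := Real.sin_sq_add_cos_sq (3*θ₁)
        linear_combination this
      rw [this]
      ring
    have hu : HasFDerivAt u (0 : ℝ × ℝ →L[ℝ] ℝ) (r * cos θ, r * sin θ) := by
      rw [hasFDerivAt_iff_isLittleO_nhds_zero] at hF0 ⊢
      refine (Asymptotics.isBigO_of_le _ ?_).trans_isLittleO hF0
      intro h
      simp only [ContinuousLinearMap.zero_apply, sub_zero, hu0, hFp0]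
      rcases huVal ((r * cos θ, r * sin θ) + h) with h0 | he
      · rw [h0]; simp
      · rw [he]
    exact hu.fderiv
  refine ⟨?_, ?_, ?_⟩
  · -- nonnegativity
    intro p
    by_cases h : ∃ r θ : ℝ, 0 < r ∧ θ₁ < θ ∧ θ < θ₁ + 2 * π / 3 ∧ p = (r * cos θ, r * sin θ)
    · obtain ⟨r, θ, hr, h1, h2, rfl⟩ := h
      rw [hcone r θ hr h1 h2]
      have := Real.cos_le_one (3*(θ - θ₁))
      have h9 : (0:ℝ) ≤ r^3/9 := by positivity
      nlinarith
    · rw [hzero p h]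
  · -- boundary
    intro r hr
    have hu1 : u (r * cos θ₁, r * sin θ₁) = 0 := by
      apply hzero
      intro h
      have hA := ((cone_iff θ₁ (r * cos θ₁, r * sin θ₁)).mp h).1
      simp only at hA
      nlinarith [hA]
    have hu2 : u (r * cos (θ₁ + 2*π/3), r * sin (θ₁ + 2*π/3)) = 0 := by
      apply hzero
      intro h
      have hB := ((cone_iff θ₁ (r * cos (θ₁ + 2*π/3), r * sin (θ₁ + 2*π/3))).mp h).2
      simp only at hB
      nlinarith [hB]
    have hc2 : Real.cos (3*(θ₁ + 2*π/3)) = Real.cos (3*θ₁) := by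
      rw [show 3*(θ₁ + 2*π/3) = 3*θ₁ + 2*π by ring, Real.cos_add_two_pi]
    have hs2 : Real.sin (3*(θ₁ + 2*π/3)) = Real.sin (3*θ₁) := by
      rw [show 3*(θ₁ + 2*π/3) = 3*θ₁ + 2*π by ring, Real.sin_add_two_pi]
    exact ⟨⟨hu1, hbd r θ₁ hr rfl rfl hu1⟩, ⟨hu2, hbd r (θ₁ + 2*π/3) hr hc2 hs2 hu2⟩⟩
  · -- laplacian
    intro r θ hr h1 h2
    have hpy := Real.sin_sq_add_cos_sq θ
    have hN : ((r * cos θ, r * sin θ) : ℝ × ℝ).1^2 + ((r * cos θ, r * sin θ) : ℝ × ℝ).2^2 ≠ 0 := by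
      simp only
      rw [show (r*cos θ)^2 + (r*sin θ)^2 = r^2 by linear_combination r^2*hpy]
      positivity
    have hS : IsOpen {q : ℝ × ℝ | 0 < Real.cos θ₁ * q.2 - Real.sin θ₁ * q.1 ∧
        0 < Real.sin (θ₁ + 2 * π / 3) * q.1 - Real.cos (θ₁ + 2 * π / 3) * q.2} := by
      exact (isOpen_lt continuous_const ((continuous_const.mul continuous_snd).sub
          (continuous_const.mul continuous_fst))).inter
        (isOpen_lt continuous_const ((continuous_const.mul continuous_fst).sub
          (continuous_const.mul continuous_snd)))
    have hmem : ((r * cos θ, r * sin θ) : ℝ × ℝ) ∈ {q : ℝ × ℝ |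
        0 < Real.cos θ₁ * q.2 - Real.sin θ₁ * q.1 ∧
        0 < Real.sin (θ₁ + 2 * π / 3) * q.1 - Real.cos (θ₁ + 2 * π / 3) * q.2} :=
      (cone_iff θ₁ _).mp ⟨r, θ, hr, h1, h2, rfl⟩
    have heq : u =ᶠ[nhds ((r * cos θ, r * sin θ) : ℝ × ℝ)] Fc θ₁ := by
      filter_upwards [hS.mem_nhds hmem] with q hq
      exact huF q hq
    rw [lap_congr heq, lap_Fc θ₁ _ hN]
    rfl
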